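/- Let G be a finite simple connected graph, u, v distinct vertices, and p = v₁v₂⋯v_k a shortest path from u = v₁ to v = v_k. Then the map sending a pair (wu, w'v) ∈ 𝒫_u(G) × 𝒫_v(G) to the pair ((w·v₂·v₄⋯)/Π_{y∈H₁}y, (w'·v₁·v₃⋯)/Π_{y∈H₂}y), where H₁ = IA(w·v₂·v₄⋯) and H₂ = IA(w'·v₁·v₃⋯), is a bijection onto the disjoint union over all connected bipartite subgraphs H = H₁ ⊔ H₂ of G containing p with H₁\{v₂,v₄,…} ⊆ N_G[u] and H₂\{v₁,v₃,…} ⊆ N_G[v], of the sets 𝒫^∅_{Z₁(H)}(G) × 𝒫^∅_{Z₂(H)}(G), where Z₁(H) = N_G[H₁\{v₂,v₄,…}] ∪ (N_G[H₁] ∩ N_G[u]) and Z₂(H) = N_G[H₂\{v₁,v₃,…}] ∪ (N_G[H₂] ∩ N_G[v]). -/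

import Mathlib

open Classical in
noncomputable def Iav {W : Type*} [Fintype W] (G : SimpleGraph W) (T : Set W) :
    MvPolynomial W ℂ :=
  ∑ S ∈ Finset.univ.filter
      (fun S : Finset W => (∀ x ∈ S, ∀ y ∈ S, ¬ G.Adj x y) ∧ ∀ x ∈ S, x ∉ T),
    (-1 : MvPolynomial W ℂ) ^ S.card * ∏ v ∈ S, MvPolynomial.X v

def CFRel {V : Type*} (G : SimpleGraph V) : FreeMonoid V → FreeMonoid V → Prop :=
  fun a b => ∃ u v : V, u ≠ v ∧ ¬ G.Adj u v ∧
    a = FreeMonoid.of u * FreeMonoid.of v ∧ b = FreeMonoid.of v * FreeMonoid.of u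

def CFCon {V : Type*} (G : SimpleGraph V) : Con (FreeMonoid V) := conGen (CFRel G)

def CF {V : Type*} (G : SimpleGraph V) := (CFCon G).Quotient

instance {V : Type*} (G : SimpleGraph V) : Monoid (CF G) := Con.monoid _

def CFmk {V : Type*} (G : SimpleGraph V) : FreeMonoid V →* CF G := (CFCon G).mk'

def IA {V : Type*} {G : SimpleGraph V} (w : CF G) : Set V :=
  {v | ∃ u : CF G, w = u * CFmk G (FreeMonoid.of v)}

noncomputable def CFab {V : Type*} (G : SimpleGraph V) :
    CF G →* Multiplicative (Multiset V) :=
  Con.lift _ ((FreeMonoid.lift fun v => Multiplicative.ofAdd ({v} : Multiset V)))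
    (by
      refine Con.conGen_le.mpr ?_
      rintro x y ⟨u, v, -, -, rfl, rfl⟩
      refine (Con.ker_rel _).mpr ?_
      simp [mul_comm])

noncomputable def wlen {V : Type*} {G : SimpleGraph V} (w : CF G) : ℕ :=
  Multiset.card (Multiplicative.toAdd (CFab G w))

noncomputable def occ {V : Type*} [DecidableEq V] {G : SimpleGraph V} (v : V) (w : CF G) : ℕ :=
  Multiset.count v (Multiplicative.toAdd (CFab G w))

/-- The product `Π_{y∈K} y` of the letters of a finite set `K`, multiplied in
increasing order, as an element of the Cartier–Foata monoid. -/
def prodOf {V : Type*} [LinearOrder V] (G : SimpleGraph V) (K : Finset V) : CF G :=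
  CFmk G (FreeMonoid.ofList (K.sort (· ≤ ·)))

/-- `S` is an independent set of `G`. -/
def IsIndepSet {W : Type*} (G : SimpleGraph W) (S : Set W) : Prop :=
  ∀ u ∈ S, ∀ v ∈ S, ¬ G.Adj u v
open Classical in
/-- The closed neighborhood `N_G[K]` of a finite set `K`, as a finite set. -/
noncomputable def NclF {V : Type*} [Fintype V] [DecidableEq V] (G : SimpleGraph V)
    (K : Finset V) : Finset V :=
  K ∪ Finset.univ.filter (fun z => ∃ w ∈ K, G.Adj w z)

/-- The bipartite graph induced by `G` between the parts `H1` and `H2`. -/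
def bipGraph {V : Type*} [DecidableEq V] (G : SimpleGraph V) (H1 H2 : Finset V) :
    SimpleGraph V where
  Adj a b := G.Adj a b ∧ ((a ∈ H1 ∧ b ∈ H2) ∨ (a ∈ H2 ∧ b ∈ H1))
  symm := by
    constructor
    rintro a b ⟨h, h2 | h2⟩
    · exact ⟨h.symm, Or.inr ⟨h2.2, h2.1⟩⟩
    · exact ⟨h.symm, Or.inl ⟨h2.2, h2.1⟩⟩
  loopless := by constructor; rintro a ⟨h, -⟩; exact G.loopless.irrefl a h

/-- `(H1, H2)` is a connected bipartite subgraph of `G` with parts `H1`, `H2`. -/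
def IsConnBipartite {V : Type*} [Fintype V] [DecidableEq V] (G : SimpleGraph V)
    (H1 H2 : Finset V) : Prop :=
  Disjoint H1 H2 ∧ IsIndepSet G ↑H1 ∧ IsIndepSet G ↑H2 ∧
    ∀ a ∈ H1 ∪ H2, ∀ b ∈ H1 ∪ H2, (bipGraph G H1 H2).Reachable a b


/-- The vertices `v₂, v₄, …` of a path (paper indexing: `v₁ = u` is the first
vertex of the walk). -/
def evenVerts {V : Type*} {G : SimpleGraph V} {u v : V} (p : G.Walk u v) : List V :=
  (p.support.zipIdx.filter (fun x => x.2 % 2 = 1)).map Prod.fst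

/-- The vertices `v₁, v₃, …` of a path. -/
def oddVerts {V : Type*} {G : SimpleGraph V} {u v : V} (p : G.Walk u v) : List V :=
  (p.support.zipIdx.filter (fun x => x.2 % 2 = 0)).map Prod.fst

open Classical in
/-- Connected bipartite subgraphs `H = H₁ ⊔ H₂` of `G` containing the path `p`
(with `v₂, v₄, … ∈ H₁` and `v₁, v₃, … ∈ H₂`) such that `H₁ ∖ {v₂,v₄,…} ⊆ N_G[u]`
and `H₂ ∖ {v₁,v₃,…} ⊆ N_G[v]`. -/
def BipPathIdx {V : Type*} [Fintype V] [LinearOrder V] (G : SimpleGraph V)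
    {u v : V} (p : G.Walk u v) : Set (Finset V × Finset V) :=
  {H | (∀ x ∈ evenVerts p, x ∈ H.1) ∧ (∀ x ∈ oddVerts p, x ∈ H.2) ∧
    IsConnBipartite G H.1 H.2 ∧
    H.1 \ (evenVerts p).toFinset ⊆ NclF G {u} ∧
    H.2 \ (oddVerts p).toFinset ⊆ NclF G {v}}

open Classical in
/-- `Z₁(H) = N_G[H₁ ∖ {v₂,v₄,…}] ∪ (N_G[H₁] ∩ N_G[u])`. -/
noncomputable def Zone {V : Type*} [Fintype V] [LinearOrder V] (G : SimpleGraph V)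
    {u v : V} (p : G.Walk u v) (H : Finset V × Finset V) : Finset V :=
  NclF G (H.1 \ (evenVerts p).toFinset) ∪ (NclF G H.1 ∩ NclF G {u})

open Classical in
/-- `Z₂(H) = N_G[H₂ ∖ {v₁,v₃,…}] ∪ (N_G[H₂] ∩ N_G[v])`. -/
noncomputable def Ztwo {V : Type*} [Fintype V] [LinearOrder V] (G : SimpleGraph V)
    {u v : V} (p : G.Walk u v) (H : Finset V × Finset V) : Finset V :=
  NclF G (H.2 \ (oddVerts p).toFinset) ∪ (NclF G H.2 ∩ NclF G {v})


/-! ### Auxiliary development: basic theory of the Cartier–Foata monoid -/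

section CFTheory

open FreeMonoid List

variable {V : Type*} {G : SimpleGraph V}

/-- Abbreviation: the class of a list in the Cartier–Foata monoid. -/
def mkl (G : SimpleGraph V) (L : List V) : CF G := CFmk G (FreeMonoid.ofList L)

lemma mkl_append (L M : List V) : mkl G (L ++ M) = mkl G L * mkl G M := by
  simp [mkl, FreeMonoid.ofList_append, map_mul]

lemma mkl_nil : mkl G ([] : List V) = 1 := rfl

lemma mkl_singleton (x : V) : mkl G [x] = CFmk G (FreeMonoid.of x) := rfl

lemma cf_exists_rep (z : CF G) : ∃ L : List V, z = mkl G L := by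
  obtain ⟨m, hm⟩ := Con.mk'_surjective (c := CFCon G) z
  exact ⟨FreeMonoid.toList m, by simp [mkl, hm.symm, FreeMonoid.ofList_toList]; rfl⟩

lemma mkl_swap {x y : V} (hxy : x ≠ y) (hadj : ¬ G.Adj x y) :
    mkl G [x, y] = mkl G [y, x] := by
  have h : (CFCon G) (FreeMonoid.ofList [x, y]) (FreeMonoid.ofList [y, x]) :=
    ConGen.Rel.of _ _ ⟨x, y, hxy, hadj, rfl, rfl⟩
  exact (Con.eq _).mpr h

/-- Moving a letter commuting with everything after it to the end. -/
lemma mkl_cons_eq_append {x : V} {B : List V}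
    (hB : ∀ y ∈ B, y ≠ x ∧ ¬ G.Adj x y) :
    mkl G (x :: B) = mkl G (B ++ [x]) := by
  induction B with
  | nil => rfl
  | cons y B ih =>
      have h1 := hB y (by simp)
      have e1 : mkl G (x :: y :: B) = mkl G [x, y] * mkl G B := by
        rw [← mkl_append]; rfl
      have e2 : mkl G (y :: x :: B) = mkl G [y, x] * mkl G B := by
        rw [← mkl_append]; rfl
      have e3 : mkl G (x :: y :: B) = mkl G (y :: x :: B) := by
        rw [e1, e2, mkl_swap (fun h => h1.1 h.symm) h1.2]
      rw [e3]
      have : mkl G (y :: x :: B) = mkl G [y] * mkl G (x :: B) := by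
        rw [← mkl_append]; rfl
      rw [this, ih (fun z hz => hB z (by simp [hz]))]
      rw [← mkl_append]; rfl

open Classical in
/-- Projection of a word onto a pair of "dependent" letters. -/
noncomputable def filtD (G : SimpleGraph V) (a b : V) (L : List V) : List V :=
  if a = b ∨ G.Adj a b then L.filter (fun v => decide (v = a ∨ v = b)) else []

lemma filtD_append (a b : V) (L M : List V) :
    filtD G a b (L ++ M) = filtD G a b L ++ filtD G a b M := by
  unfold filtD
  split <;> simp [List.filter_append]

open Classical in
lemma filtD_swap {x y : V} (hxy : x ≠ y) (hadj : ¬ G.Adj x y) (a b : V) :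
    filtD G a b [x, y] = filtD G a b [y, x] := by
  unfold filtD
  split
  · rename_i hdep
    by_cases hx : (x = a ∨ x = b) <;> by_cases hy : (y = a ∨ y = b) <;>
      simp only [List.filter, hx, hy, decide_eq_true_eq] <;>
      [skip; simp [hx, hy]; simp [hx, hy]; simp [hx, hy]]
    · exfalso
      rcases hx with rfl | rfl <;> rcases hy with rfl | rfl
      · exact hxy rfl
      · rcases hdep with rfl | h
        · exact hxy rfl
        · exact hadj h
      · rcases hdep with rfl | h
        · exact hxy rfl
        · exact hadj (G.adj_symm h)
      · exact hxy rfl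
  · rfl

/-- The projection congruence. -/
noncomputable def projCon (G : SimpleGraph V) : Con (FreeMonoid V) where
  r L L' := ∀ a b, filtD G a b (FreeMonoid.toList L) = filtD G a b (FreeMonoid.toList L')
  iseqv := ⟨fun _ _ _ => rfl, fun h a b => (h a b).symm, fun h h' a b => (h a b).trans (h' a b)⟩
  mul' := by
    intro w x y z h h' a b
    rw [FreeMonoid.toList_mul, FreeMonoid.toList_mul, filtD_append, filtD_append, h a b, h' a b]

lemma cfcon_le_projCon : CFCon G ≤ projCon G := by
  refine Con.conGen_le.mpr ?_
  rintro x y ⟨s, t, hst, hadj, rfl, rfl⟩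
  intro a b
  exact filtD_swap hst hadj a b

lemma filtD_eq_of_mkl_eq {L L' : List V} (h : mkl G L = mkl G L') (a b : V) :
    filtD G a b L = filtD G a b L' := by
  have h1 := (Con.eq _).mp h
  exact Con.le_def.mp cfcon_le_projCon h1 a b

open Classical in
lemma filtD_self_mem {x : V} {L : List V} (hx : x ∈ L) : x ∈ filtD G x x L := by
  unfold filtD
  rw [if_pos (Or.inl rfl)]
  simp [hx]

open Classical in
lemma mem_of_mem_filtD {a b x : V} {L : List V} (hx : x ∈ filtD G a b L) :
    x ∈ L ∧ (x = a ∨ x = b) := by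
  unfold filtD at hx
  split at hx
  · have := List.mem_filter.mp hx
    exact ⟨this.1, by simpa using this.2⟩
  · simp at hx

lemma exists_last_split {x : V} {L : List V} (hx : x ∈ L) :
    ∃ A B, L = A ++ x :: B ∧ x ∉ B := by
  induction L with
  | nil => simp at hx
  | cons a L ih =>
      by_cases h : x ∈ L
      · obtain ⟨A, B, rfl, hB⟩ := ih h
        exact ⟨a :: A, B, rfl, hB⟩
      · have : x = a := by
          rcases List.mem_cons.mp hx with h' | h'
          · exact h'
          · exact absurd h' h
        exact ⟨[], L, by simp [this], h⟩

open Classical in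
/-- Key filter computation: if the projections of `M ++ [x]` and `A ++ x :: B` agree,
with `x ∉ B`, then `x` is not adjacent to any element of `B`. -/
lemma not_adj_of_filtD_eq {x : V} {M A B : List V}
    (h : ∀ a b, filtD G a b (M ++ [x]) = filtD G a b (A ++ x :: B))
    (hxB : x ∉ B) : ∀ y ∈ B, ¬ G.Adj x y := by
  intro y hy hadj
  have hdep : x = y ∨ G.Adj x y := Or.inr hadj
  have hxy : x ≠ y := fun h' => hxB (h' ▸ hy)
  have hL := h x y
  unfold filtD at hL
  rw [if_pos hdep, if_pos hdep] at hL
  set p : V → Bool := fun v => decide (v = x ∨ v = y) with hp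
  have hpx : p x = true := by simp [hp]
  have hpy : p y = true := by simp [hp]
  have hlhs : (M ++ [x]).filter p = M.filter p ++ [x] := by
    simp [List.filter_append, List.filter, hpx]
  have hrhs : (A ++ x :: B).filter p = A.filter p ++ x :: B.filter p := by
    simp [List.filter_append, List.filter_cons, hpx]
  rw [hlhs, hrhs] at hL
  -- last element of LHS is x, last element of RHS is in B.filter p hence ≠ x
  have hBy : y ∈ B.filter p := List.mem_filter.mpr ⟨hy, hpy⟩
  have hBne : B.filter p ≠ [] := List.ne_nil_of_mem hBy
  set q := (B.filter p).getLast hBne with hq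
  have hqmem : q ∈ B.filter p := List.getLast_mem hBne
  have hsplit : (B.filter p).dropLast ++ [q] = B.filter p :=
    List.dropLast_append_getLast hBne
  rw [← hsplit] at hL
  have hL2 : M.filter p ++ [x] =
      (A.filter p ++ x :: (B.filter p).dropLast) ++ [q] := by
    rw [hL]; simp
  have hxq : x = q := by
    have := congrArg List.getLast? hL2
    rw [List.getLast?_concat, List.getLast?_concat] at this
    exact Option.some_injective _ this
  exact hxB (hxq ▸ (List.mem_filter.mp hqmem).1)


lemma mem_IA_of_split {L A B : List V} {x : V} (hL : L = A ++ x :: B)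
    (hB : ∀ y ∈ B, y ≠ x ∧ ¬ G.Adj x y) : x ∈ IA (mkl G L) := by
  refine ⟨mkl G (A ++ B), ?_⟩
  rw [hL, mkl_append, mkl_cons_eq_append hB, mkl_append, mkl_append, mul_assoc]
  rfl

lemma mem_IA_mkl_iff {L : List V} {x : V} :
    x ∈ IA (mkl G L) ↔ ∃ A B, L = A ++ x :: B ∧ ∀ y ∈ B, y ≠ x ∧ ¬ G.Adj x y := by
  constructor
  · rintro ⟨c, hc⟩
    obtain ⟨M, rfl⟩ := cf_exists_rep c
    have hzM : mkl G L = mkl G (M ++ [x]) := by rw [hc, mkl_append]; rfl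
    have hf : ∀ a b, filtD G a b (M ++ [x]) = filtD G a b L :=
      fun a b => (filtD_eq_of_mkl_eq hzM a b).symm
    have hxL : x ∈ L := by
      have h1 : x ∈ filtD G x x (M ++ [x]) := filtD_self_mem (by simp)
      rw [hf x x] at h1
      exact (mem_of_mem_filtD h1).1
    obtain ⟨A, B, hsplit, hxB⟩ := exists_last_split hxL
    refine ⟨A, B, hsplit, fun y hy => ⟨fun e => hxB (e ▸ hy), ?_⟩⟩
    exact not_adj_of_filtD_eq (fun a b => hsplit ▸ hf a b) hxB y hy
  · rintro ⟨A, B, hL, hB⟩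
    exact mem_IA_of_split hL hB

lemma mkl_eq_of_filtD : ∀ {L L' : List V},
    (∀ a b, filtD G a b L = filtD G a b L') → mkl G L = mkl G L' := by
  intro L
  induction L using List.reverseRecOn with
  | nil =>
      intro L' h
      have : L' = [] := by
        refine List.eq_nil_iff_forall_not_mem.mpr (fun y hy => ?_)
        have h1 : y ∈ filtD G y y L' := filtD_self_mem hy
        rw [← h y y] at h1
        exact absurd (mem_of_mem_filtD h1).1 (by simp)
      rw [this]
  | append_singleton L₀ x ih =>
      intro L' h
      have hxL' : x ∈ L' := by
        have h1 : x ∈ filtD G x x (L₀ ++ [x]) := filtD_self_mem (by simp)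
        rw [h x x] at h1
        exact (mem_of_mem_filtD h1).1
      obtain ⟨A, B, hsplit, hxB⟩ := exists_last_split hxL'
      have hBcomm : ∀ y ∈ B, y ≠ x ∧ ¬ G.Adj x y := fun y hy =>
        ⟨fun e => hxB (e ▸ hy),
         not_adj_of_filtD_eq (fun a b => hsplit ▸ h a b) hxB y hy⟩
      have hL' : mkl G L' = mkl G ((A ++ B) ++ [x]) := by
        rw [hsplit, mkl_append, mkl_cons_eq_append hBcomm, ← mkl_append,
          ← List.append_assoc]
      have hf2 : ∀ a b, filtD G a b L₀ = filtD G a b (A ++ B) := by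
        intro a b
        have h1 : filtD G a b L' = filtD G a b ((A ++ B) ++ [x]) :=
          filtD_eq_of_mkl_eq hL' a b
        have h2 := (h a b).trans h1
        rw [filtD_append, filtD_append] at h2
        exact List.append_cancel_right h2
      calc mkl G (L₀ ++ [x]) = mkl G L₀ * mkl G [x] := mkl_append _ _
        _ = mkl G (A ++ B) * mkl G [x] := by rw [ih hf2]
        _ = mkl G ((A ++ B) ++ [x]) := (mkl_append _ _).symm
        _ = mkl G L' := hL'.symm

lemma mkl_eq_iff {L L' : List V} :
    mkl G L = mkl G L' ↔ ∀ a b, filtD G a b L = filtD G a b L' :=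
  ⟨filtD_eq_of_mkl_eq, mkl_eq_of_filtD⟩

/-- The Cartier–Foata monoid is right-cancellative. -/
lemma cf_cancel_right {s s' c : CF G} (h : s * c = s' * c) : s = s' := by
  obtain ⟨Ls, rfl⟩ := cf_exists_rep s
  obtain ⟨Ls', rfl⟩ := cf_exists_rep s'
  obtain ⟨Lc, rfl⟩ := cf_exists_rep c
  rw [← mkl_append, ← mkl_append] at h
  refine mkl_eq_of_filtD (fun a b => ?_)
  have h2 := filtD_eq_of_mkl_eq h a b
  rw [filtD_append, filtD_append] at h2
  exact List.append_cancel_right h2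

/-- Key step: if `z = c·x` and `y ∈ IA z` with `y ≠ x`, then `x` and `y`
are non-adjacent and `y ∈ IA c`. -/
lemma IA_step {z c : CF G} {x y : V} (hz : z = c * CFmk G (FreeMonoid.of x))
    (hy : y ∈ IA z) (hyx : y ≠ x) : ¬ G.Adj x y ∧ y ∈ IA c := by
  obtain ⟨M, rfl⟩ := cf_exists_rep c
  have hzM : z = mkl G (M ++ [x]) := by rw [hz, mkl_append]; rfl
  rw [hzM] at hy
  obtain ⟨A, B, hsplit, hB⟩ := mem_IA_mkl_iff.mp hy
  have hBne : B ≠ [] := by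
    rintro rfl
    have h1 := congrArg List.getLast? hsplit
    have h2 : A ++ y :: ([] : List V) = A ++ [y] := rfl
    rw [h2, List.getLast?_concat, List.getLast?_concat] at h1
    exact hyx (Option.some_injective _ h1).symm
  set q := B.getLast hBne with hq
  have hqB : q ∈ B := List.getLast_mem hBne
  have hsplit2 : M ++ [x] = (A ++ y :: B.dropLast) ++ [q] := by
    rw [hsplit, ← List.dropLast_append_getLast hBne]
    simp [hq]
  have hqx : q = x := by
    have h1 := congrArg List.getLast? hsplit2
    rw [List.getLast?_concat, List.getLast?_concat] at h1
    exact (Option.some_injective _ h1).symm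
  have hadjxy : ¬ G.Adj x y := by
    have := (hB q hqB).2
    rw [hqx] at this
    exact fun hc => this (G.adj_symm hc)
  have hM : M = A ++ y :: B.dropLast := by
    rw [hqx] at hsplit2
    exact List.append_cancel_right hsplit2
  refine ⟨hadjxy, mem_IA_of_split hM (fun y' hy' => hB y' ?_)⟩
  exact (List.dropLast_sublist _).subset hy'

lemma IA_of_comm_mul {z : CF G} {x y : V} (hy : y ∈ IA z) (hyx : y ≠ x)
    (hadj : ¬ G.Adj y x) : y ∈ IA (z * CFmk G (FreeMonoid.of x)) := by
  obtain ⟨d, hd⟩ := hy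
  refine ⟨d * CFmk G (FreeMonoid.of x), ?_⟩
  have hsw : mkl G [y, x] = mkl G [x, y] := mkl_swap hyx hadj
  calc z * CFmk G (FreeMonoid.of x) = d * (mkl G [y] * mkl G [x]) := by
        rw [hd]; rw [mul_assoc]; rfl
    _ = d * mkl G [y, x] := by rw [← mkl_append]; rfl
    _ = d * mkl G [x, y] := by rw [hsw]
    _ = d * (mkl G [x] * mkl G [y]) := by rw [← mkl_append]; rfl
    _ = d * CFmk G (FreeMonoid.of x) * CFmk G (FreeMonoid.of y) := by
        rw [← mul_assoc]; rfl

lemma IA_mul_list_cases {c : CF G} {l : List V} {y : V}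
    (hy : y ∈ IA (c * mkl G l)) :
    y ∈ l ∨ (y ∈ IA c ∧ ∀ x ∈ l, y ≠ x ∧ ¬ G.Adj y x) := by
  induction l using List.reverseRecOn with
  | nil =>
      right
      rw [mkl_nil, mul_one] at hy
      exact ⟨hy, by simp⟩
  | append_singleton l₀ x ih =>
      rw [mkl_append, ← mul_assoc] at hy
      by_cases hyx : y = x
      · left; simp [hyx]
      · have hstep := IA_step (z := c * mkl G l₀ * mkl G [x]) rfl hy hyx
        rcases ih hstep.2 with h | ⟨h1, h2⟩
        · left; simp [h]
        · right
          refine ⟨h1, fun x' hx' => ?_⟩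
          rcases List.mem_append.mp hx' with h' | h'
          · exact h2 x' h'
          · have : x' = x := by simpa using h'
            subst this
            exact ⟨hyx, fun hc => hstep.1 (G.adj_symm hc)⟩

lemma IA_mem_mul_list {c : CF G} {l : List V}
    (hcomm : ∀ a ∈ l, ∀ b ∈ l, a ≠ b → ¬ G.Adj a b) {x : V} (hx : x ∈ l) :
    x ∈ IA (c * mkl G l) := by
  obtain ⟨A, B, hsplit, hxB⟩ := exists_last_split hx
  have hB : ∀ y ∈ B, y ≠ x ∧ ¬ G.Adj x y := by
    intro y hy
    have hyl : y ∈ l := by rw [hsplit]; simp [hy]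
    have hyne : y ≠ x := fun e => hxB (e ▸ hy)
    exact ⟨hyne, hcomm x hx y hyl (Ne.symm hyne)⟩
  refine ⟨c * mkl G (A ++ B), ?_⟩
  rw [hsplit, mkl_append, mkl_cons_eq_append hB, mkl_append, mkl_append]
  show c * (mkl G A * (mkl G B * mkl G [x])) = c * (mkl G A * mkl G B) * mkl G [x]
  rw [mul_assoc, mul_assoc]

lemma IA_comm_mem_mul_list {c : CF G} {l : List V} {y : V} (hy : y ∈ IA c)
    (h : ∀ x ∈ l, y ≠ x ∧ ¬ G.Adj y x) : y ∈ IA (c * mkl G l) := by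
  obtain ⟨d, hd⟩ := hy
  have hB : ∀ x ∈ l, x ≠ y ∧ ¬ G.Adj y x := fun x hx =>
    ⟨Ne.symm (h x hx).1, (h x hx).2⟩
  refine ⟨d * mkl G l, ?_⟩
  calc c * mkl G l = d * (mkl G [y] * mkl G l) := by
        rw [hd, mul_assoc]; rfl
    _ = d * mkl G (y :: l) := by rw [← mkl_append]; rfl
    _ = d * mkl G (l ++ [y]) := by rw [mkl_cons_eq_append hB]
    _ = d * (mkl G l * mkl G [y]) := by rw [← mkl_append]
    _ = d * mkl G l * CFmk G (FreeMonoid.of y) := by rw [← mul_assoc]; rfl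

lemma divide_list : ∀ (l : List V) (z : CF G), l.Nodup → (∀ x ∈ l, x ∈ IA z) →
    ∃ c, z = c * mkl G l ∧ ∀ y ∈ IA c, y ∈ IA z ∨ ∃ x ∈ l, y = x ∨ G.Adj y x := by
  intro l
  induction l with
  | nil =>
      intro z _ _
      exact ⟨z, by rw [mkl_nil, mul_one], fun y hy => Or.inl hy⟩
  | cons x l' ih =>
      intro z hnd hmem
      obtain ⟨c₁, hc₁⟩ := hmem x (by simp)
      have hl' : ∀ k ∈ l', ¬ G.Adj x k ∧ k ∈ IA c₁ := by
        intro k hk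
        have hkx : k ≠ x := fun e => (List.nodup_cons.mp hnd).1 (e ▸ hk)
        exact IA_step hc₁ (hmem k (by simp [hk])) hkx
      obtain ⟨c, hcc, hIA⟩ := ih c₁ (List.nodup_cons.mp hnd).2 (fun k hk => (hl' k hk).2)
      have hcons : ∀ k ∈ l', k ≠ x ∧ ¬ G.Adj x k := by
        intro k hk
        exact ⟨fun e => (List.nodup_cons.mp hnd).1 (e ▸ hk), (hl' k hk).1⟩
      refine ⟨c, ?_, ?_⟩
      · calc z = c₁ * CFmk G (FreeMonoid.of x) := hc₁
          _ = c * mkl G l' * mkl G [x] := by rw [hcc]; rfl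
          _ = c * mkl G (l' ++ [x]) := by rw [mul_assoc, ← mkl_append]
          _ = c * mkl G (x :: l') := by rw [← mkl_cons_eq_append hcons]
      · intro y hy
        rcases hIA y hy with h | ⟨x', hx', h'⟩
        · by_cases hcase : y = x ∨ G.Adj y x
          · exact Or.inr ⟨x, by simp, hcase⟩
          · push_neg at hcase
            have : y ∈ IA (c₁ * CFmk G (FreeMonoid.of x)) :=
              IA_of_comm_mul h hcase.1 hcase.2
            rw [← hc₁] at this
            exact Or.inl this
        · exact Or.inr ⟨x', by simp [hx'], h'⟩

lemma mkl_perm {l l' : List V} (hp : l.Perm l')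
    (hcomm : ∀ a ∈ l, ∀ b ∈ l, a ≠ b → ¬ G.Adj a b) : mkl G l = mkl G l' := by
  induction hp with
  | nil => rfl
  | cons a h ih =>
      rename_i l₁ l₂
      have : mkl G l₁ = mkl G l₂ := ih (fun a' ha' b hb hab =>
        hcomm a' (by simp [ha']) b (by simp [hb]) hab)
      calc mkl G (a :: l₁) = mkl G [a] * mkl G l₁ := by rw [← mkl_append]; rfl
        _ = mkl G [a] * mkl G l₂ := by rw [this]
        _ = mkl G (a :: l₂) := by rw [← mkl_append]; rfl
  | swap a b l =>
      by_cases hab : a = b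
      · subst hab; rfl
      · have h1 : ¬ G.Adj b a :=
          hcomm b (by simp) a (by simp) (Ne.symm hab)
        calc mkl G (b :: a :: l) = mkl G [b, a] * mkl G l := by
              rw [← mkl_append]; rfl
          _ = mkl G [a, b] * mkl G l := by rw [mkl_swap (Ne.symm hab) h1]
          _ = mkl G (a :: b :: l) := by rw [← mkl_append]; rfl
  | trans h₁ h₂ ih₁ ih₂ =>
      rename_i l₁ l₂ l₃
      refine (ih₁ hcomm).trans (ih₂ ?_)
      intro a ha b hb hab
      exact hcomm a (h₁.mem_iff.mpr ha) b (h₁.mem_iff.mpr hb) hab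

lemma cfab_mkl (L : List V) :
    Multiplicative.toAdd (CFab G (mkl G L)) = (L : Multiset V) := by
  induction L with
  | nil =>
      rw [mkl_nil, map_one]
      rfl
  | cons x L ih =>
      have h1 : mkl G (x :: L) = mkl G [x] * mkl G L := by rw [← mkl_append]; rfl
      rw [h1, map_mul, toAdd_mul, ih]
      have h2 : CFab G (mkl G [x]) = Multiplicative.ofAdd ({x} : Multiset V) := by
        have h := Con.lift_mk' (c := CFCon G)
          (f := (FreeMonoid.lift fun v => Multiplicative.ofAdd ({v} : Multiset V)))
          (by
            refine Con.conGen_le.mpr ?_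
            rintro x y ⟨u, v, -, -, rfl, rfl⟩
            refine (Con.ker_rel _).mpr ?_
            simp [mul_comm]) (FreeMonoid.of x)
        exact h.trans (by simp)
      rw [h2]
      show ({x} : Multiset V) + (L : Multiset V) = ((x :: L : List V) : Multiset V)
      rw [← Multiset.cons_coe, ← Multiset.singleton_add]

lemma wlen_mkl (L : List V) : wlen (mkl G L) = L.length := by
  unfold wlen
  rw [cfab_mkl]
  simp

lemma mkl_ne_one {L : List V} (h : L ≠ []) : mkl G L ≠ 1 := by
  intro he
  have h1 : wlen (mkl G L) = L.length := wlen_mkl L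
  have h2 : wlen (mkl G ([] : List V)) = 0 := wlen_mkl []
  rw [he, ← mkl_nil] at h1
  rw [h2] at h1
  exact h (List.eq_nil_of_length_eq_zero h1.symm)

lemma mul_of_ne_one (w : CF G) (x : V) : w * CFmk G (FreeMonoid.of x) ≠ 1 := by
  obtain ⟨M, rfl⟩ := cf_exists_rep w
  have : mkl G M * CFmk G (FreeMonoid.of x) = mkl G (M ++ [x]) := by
    rw [mkl_append]; rfl
  rw [this]
  exact mkl_ne_one (by simp)

lemma IA_nonempty {z : CF G} (h : z ≠ 1) : ∃ x, x ∈ IA z := by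
  obtain ⟨L, rfl⟩ := cf_exists_rep z
  induction L using List.reverseRecOn with
  | nil => exact absurd rfl h
  | append_singleton l x _ =>
      exact ⟨x, mem_IA_of_split rfl (by simp)⟩

/-- Independence of the initial alphabet. -/
lemma IA_indep {z : CF G} {x y : V} (hx : x ∈ IA z) (hy : y ∈ IA z)
    (hxy : x ≠ y) : ¬ G.Adj x y := by
  obtain ⟨c, hc⟩ := hx
  exact (IA_step hc hy (Ne.symm hxy)).1

end CFTheory


/-! ### Walk and path lemmas -/

section WalkTheory

open SimpleGraph

variable {V : Type*} {G : SimpleGraph V}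

/-- The first `n` steps of a walk. -/
def takeW : ∀ {u v : V} (p : G.Walk u v) (n : ℕ), G.Walk u (p.getVert n)
  | _, _, p, 0 => SimpleGraph.Walk.nil.copy rfl (p.getVert_zero).symm
  | _, _, SimpleGraph.Walk.nil, _ + 1 => SimpleGraph.Walk.nil
  | _, _, SimpleGraph.Walk.cons h q, n + 1 =>
      (SimpleGraph.Walk.cons h (takeW q n)).copy rfl
        (SimpleGraph.Walk.getVert_cons_succ _ h).symm

lemma length_takeW : ∀ {u v : V} (p : G.Walk u v) (n : ℕ),
    (takeW p n).length = min n p.length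
  | _, _, p, 0 => by simp [takeW]
  | _, _, SimpleGraph.Walk.nil, n + 1 => by simp [takeW]
  | _, _, SimpleGraph.Walk.cons h q, n + 1 => by
      simp [takeW, length_takeW q n, Nat.succ_min_succ]

/-- Dropping the first `n` steps of a walk. -/
def dropW : ∀ {u v : V} (p : G.Walk u v) (n : ℕ), G.Walk (p.getVert n) v
  | _, _, p, 0 => p.copy (p.getVert_zero).symm rfl
  | _, _, SimpleGraph.Walk.nil, _ + 1 => SimpleGraph.Walk.nil
  | _, _, SimpleGraph.Walk.cons h q, n + 1 =>
      (dropW q n).copy (SimpleGraph.Walk.getVert_cons_succ _ h).symm rfl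

lemma length_dropW : ∀ {u v : V} (p : G.Walk u v) (n : ℕ),
    (dropW p n).length = p.length - n
  | _, _, p, 0 => by simp [dropW]
  | _, _, SimpleGraph.Walk.nil, n + 1 => by simp [dropW]
  | _, _, SimpleGraph.Walk.cons h q, n + 1 => by
      simp [dropW, length_dropW q n]

/-- In a shortest walk, vertices at distance at least 2 along the walk
are non-adjacent. -/
lemma shortest_not_adj {u v : V} {p : G.Walk u v} (hshort : p.length = G.dist u v)
    {i j : ℕ} (hij : i + 1 < j) (hj : j ≤ p.length) :
    ¬ G.Adj (p.getVert i) (p.getVert j) := by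
  intro hadj
  have hw := SimpleGraph.dist_le ((takeW p i).append (SimpleGraph.Walk.cons hadj (dropW p j)))
  rw [SimpleGraph.Walk.length_append, SimpleGraph.Walk.length_cons,
    length_takeW, length_dropW] at hw
  have hmin : min i p.length = i := min_eq_left (by omega)
  omega

lemma walk_support_getElem {u v : V} (p : G.Walk u v) :
    ∀ (i : ℕ) (h : i < p.support.length), p.support[i] = p.getVert i := by
  induction p with
  | nil =>
      intro i h
      simp only [SimpleGraph.Walk.support_nil, List.length_singleton] at h
      have : i = 0 := by omega
      subst this
      simp [SimpleGraph.Walk.getVert_zero]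
  | cons hadj q ih =>
      intro i h
      cases i with
      | zero => simp [SimpleGraph.Walk.support_cons]
      | succ n =>
          simp only [SimpleGraph.Walk.support_cons, List.getElem_cons_succ]
          rw [ih n (by simpa [SimpleGraph.Walk.support_cons] using h)]
          rfl

variable {u v : V} {p : G.Walk u v}

/-- The list of vertices of `p` in positions congruent to `r` mod 2. -/
def pverts (p : G.Walk u v) (r : ℕ) : List V :=
  (p.support.zipIdx.filter (fun x => x.2 % 2 = r)).map Prod.fst

lemma evenVerts_eq_pverts : evenVerts p = pverts p 1 := rfl

lemma oddVerts_eq_pverts : oddVerts p = pverts p 0 := rfl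

lemma mem_pverts {x : V} {r : ℕ} :
    x ∈ pverts p r ↔ ∃ i, i ≤ p.length ∧ i % 2 = r ∧ p.getVert i = x := by
  unfold pverts
  rw [List.mem_map]
  constructor
  · rintro ⟨⟨y, i⟩, hmem, rfl⟩
    have h1 := List.mem_filter.mp hmem
    have h2 : (y, i) ∈ p.support.zipIdx := h1.1
    have h3 : i % 2 = r := by simpa using h1.2
    have h4 : p.support[i]? = some y := List.mem_zipIdx_iff_getElem?.mp h2
    have h5 : i < p.support.length := by
      by_contra hc
      rw [List.getElem?_eq_none (by omega)] at h4
      simp at h4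
    have h6 : p.support[i] = y := by
      rw [List.getElem?_eq_getElem h5] at h4
      simpa using h4
    refine ⟨i, ?_, h3, ?_⟩
    · have := p.length_support
      omega
    · rw [← walk_support_getElem p i h5, h6]
  · rintro ⟨i, hi, hr, rfl⟩
    have h5 : i < p.support.length := by
      have := p.length_support
      omega
    refine ⟨(p.support[i], i), ?_, walk_support_getElem p i h5⟩
    rw [List.mem_filter]
    refine ⟨List.mem_zipIdx_iff_getElem?.mpr ?_, by simpa using hr⟩
    simp [List.getElem?_eq_getElem h5]

lemma pverts_pairwise (hpath : p.IsPath) (hshort : p.length = G.dist u v) (r : ℕ) :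
    (pverts p r).Pairwise (fun a b => a ≠ b ∧ ¬ G.Adj a b ∧ ¬ G.Adj b a) := by
  unfold pverts
  rw [List.pairwise_map]
  have h1 : p.support.zipIdx.Pairwise (fun a b => a.2 < b.2) := by
    rw [List.pairwise_iff_getElem]
    intro i j hi hj hij
    rw [List.getElem_zipIdx, List.getElem_zipIdx]
    simpa using hij
  have h2 := h1.filter (fun x => decide (x.2 % 2 = r))
  refine h2.imp_of_mem ?_
  intro a b ha hb hlt
  have har : a.2 % 2 = r := by simpa using (List.mem_filter.mp ha).2
  have hbr : b.2 % 2 = r := by simpa using (List.mem_filter.mp hb).2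
  have hae := (List.mem_filter.mp ha).1
  have hbe := (List.mem_filter.mp hb).1
  have h4a : p.support[a.2]? = some a.1 := List.mem_zipIdx_iff_getElem?.mp hae
  have h4b : p.support[b.2]? = some b.1 := List.mem_zipIdx_iff_getElem?.mp hbe
  have h5a : a.2 < p.support.length := by
    by_contra hc
    rw [List.getElem?_eq_none (by omega)] at h4a
    simp at h4a
  have h5b : b.2 < p.support.length := by
    by_contra hc
    rw [List.getElem?_eq_none (by omega)] at h4b
    simp at h4b
  have h6a : p.support[a.2] = a.1 := by
    rw [List.getElem?_eq_getElem h5a] at h4a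
    simpa using h4a
  have h6b : p.support[b.2] = b.1 := by
    rw [List.getElem?_eq_getElem h5b] at h4b
    simpa using h4b
  have g6a : p.getVert a.2 = a.1 := by
    rw [← walk_support_getElem p a.2 h5a]; exact h6a
  have g6b : p.getVert b.2 = b.1 := by
    rw [← walk_support_getElem p b.2 h5b]; exact h6b
  have hne : a.1 ≠ b.1 := by
    rw [← g6a, ← g6b]
    intro hc
    have hs : p.support[a.2]'h5a = p.support[b.2]'h5b := by
      rw [h6a, h6b, ← g6a, ← g6b]
      exact hc
    have h7 := (List.Nodup.getElem_inj_iff hpath.support_nodup).mp hs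
    omega
  have hgap : a.2 + 1 < b.2 := by omega
  have hgv : ¬ G.Adj (p.getVert a.2) (p.getVert b.2) :=
    shortest_not_adj hshort hgap (by have := p.length_support; omega)
  refine ⟨hne, ?_, ?_⟩
  · rw [← g6a, ← g6b]; exact hgv
  · rw [← g6a, ← g6b]; exact fun hc => hgv (G.adj_symm hc)

lemma pverts_nodup (hpath : p.IsPath) (hshort : p.length = G.dist u v) (r : ℕ) :
    (pverts p r).Nodup :=
  (pverts_pairwise hpath hshort r).imp (fun h => h.1)

lemma pverts_comm (hpath : p.IsPath) (hshort : p.length = G.dist u v) (r : ℕ) :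
    ∀ a ∈ pverts p r, ∀ b ∈ pverts p r, a ≠ b → ¬ G.Adj a b := by
  intro a ha b hb hab
  have hp := pverts_pairwise (p := p) hpath hshort r
  have hsym : Symmetric (fun a b : V => a ≠ b ∧ ¬ G.Adj a b ∧ ¬ G.Adj b a) :=
    fun x y h => ⟨Ne.symm h.1, h.2.2, h.2.1⟩
  exact (haveI : Std.Symm (fun a b : V => a ≠ b ∧ ¬ G.Adj a b ∧ ¬ G.Adj b a) := ⟨fun x y h => hsym h⟩; hp.forall ha hb hab).2.1

end WalkTheory


/-! ### Neighborhoods and the per-side lemmas -/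

section SideTheory

variable {V : Type*} [Fintype V] [LinearOrder V] {G : SimpleGraph V}

lemma mem_NclF {K : Finset V} {y : V} :
    y ∈ NclF G K ↔ y ∈ K ∨ ∃ w ∈ K, G.Adj w y := by
  unfold NclF
  simp

lemma mem_NclF_singleton {c y : V} :
    y ∈ NclF G {c} ↔ y = c ∨ G.Adj c y := by
  rw [mem_NclF]
  simp

open Classical in
/-- The initial alphabet as a finset. -/
noncomputable def IAfin (G : SimpleGraph V) (z : CF G) : Finset V :=
  Finset.univ.filter (· ∈ IA z)

lemma mem_IAfin {z : CF G} {x : V} : x ∈ IAfin G z ↔ x ∈ IA z := by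
  unfold IAfin
  simp

lemma coe_IAfin (z : CF G) : (↑(IAfin G z) : Set V) = IA z := by
  ext x
  simp [mem_IAfin]

open Classical in
/-- Right division in the Cartier–Foata monoid. -/
noncomputable def rdiv (z t : CF G) : CF G :=
  if h : ∃ w, z = w * t then h.choose else 1

lemma rdiv_spec {z t : CF G} (h : ∃ w, z = w * t) : z = rdiv z t * t := by
  classical
  unfold rdiv
  rw [dif_pos h]
  exact h.choose_spec

lemma rdiv_eq {z w t : CF G} (h : z = w * t) : rdiv z t = w :=
  cf_cancel_right ((rdiv_spec ⟨w, h⟩).symm.trans h)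

/-- Per-side forward: description of the elements of `IA (w·l)` not in `l`. -/
lemma side_forward_b {w : CF G} {c : V} {l : List V}
    (hIAs : IA (w * CFmk G (FreeMonoid.of c)) ⊆ {c})
    (hcl : c ∈ l ∨ ∃ e ∈ l, G.Adj c e)
    {x : V} (hx : x ∈ IA (w * mkl G l)) (hxl : x ∉ l) :
    G.Adj x c ∧ x ∈ IA w ∧ ∀ e ∈ l, x ≠ e ∧ ¬ G.Adj x e := by
  rcases IA_mul_list_cases hx with h | ⟨h1, h2⟩
  · exact absurd h hxl
  by_cases hxc : x = c
  · subst hxc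
    rcases hcl with h | ⟨e, hel, hadj⟩
    · exact absurd h hxl
    · exact absurd hadj (h2 e hel).2
  by_cases hadj : G.Adj x c
  · exact ⟨hadj, h1, h2⟩
  · have hmem : x ∈ IA (w * CFmk G (FreeMonoid.of c)) :=
      IA_of_comm_mul h1 hxc hadj
    exact absurd (hIAs hmem) hxc

/-- Per-side forward division: `z = a · Π(IA z)` with control on `IA a`. -/
lemma side_forward_div {w : CF G} {c : V} {l : List V}
    (hIAs : IA (w * CFmk G (FreeMonoid.of c)) ⊆ {c})
    (hcl : c ∈ l ∨ ∃ e ∈ l, G.Adj c e)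
    (hlnd : l.Nodup)
    (hlcomm : ∀ a ∈ l, ∀ b ∈ l, a ≠ b → ¬ G.Adj a b) :
    ∃ a, w * mkl G l = a * prodOf G (IAfin G (w * mkl G l)) ∧
      ∀ y ∈ IA a,
        y ∈ NclF G (IAfin G (w * mkl G l) \ l.toFinset) ∨
        (y ∈ NclF G (IAfin G (w * mkl G l)) ∧ y ∈ NclF G {c}) := by
  classical
  set z := w * mkl G l with hz
  set K := IAfin G z with hK
  set K' := K \ l.toFinset with hK'
  set l₂ := K'.sort (· ≤ ·) with hl₂
  have hlK : ∀ x ∈ l, x ∈ K := fun x hx =>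
    mem_IAfin.mpr (IA_mem_mul_list hlcomm hx)
  have hcommK : ∀ x ∈ K, ∀ y ∈ K, x ≠ y → ¬ G.Adj x y := by
    intro x hx y hy hxy
    exact IA_indep (mem_IAfin.mp hx) (mem_IAfin.mp hy) hxy
  have hK'IA : ∀ x ∈ K', x ∈ IA w ∧ ∀ e ∈ l, x ≠ e ∧ ¬ G.Adj x e := by
    intro x hx
    rw [hK', Finset.mem_sdiff] at hx
    have h1 := (side_forward_b hIAs hcl (mem_IAfin.mp hx.1)
      (fun hc => hx.2 (List.mem_toFinset.mpr hc)))
    exact ⟨h1.2.1, h1.2.2⟩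
  have hl₂mem : ∀ x, x ∈ l₂ ↔ x ∈ K' := fun x => Finset.mem_sort _
  obtain ⟨a, ha1, ha2⟩ := divide_list l₂ w (Finset.sort_nodup _ _)
    (fun x hx => (hK'IA x ((hl₂mem x).mp hx)).1)
  have hnd12 : (l₂ ++ l).Nodup := by
    rw [List.nodup_append']
    refine ⟨Finset.sort_nodup _ _, hlnd, ?_⟩
    intro x hx hx'
    have := (hl₂mem x).mp hx
    rw [hK', Finset.mem_sdiff] at this
    exact this.2 (List.mem_toFinset.mpr hx')
  have e1 : (l₂ ++ l).toFinset = K := by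
    rw [List.toFinset_append, hl₂, Finset.sort_toFinset, hK',
      Finset.sdiff_union_of_subset (fun x hx => hlK x (List.mem_toFinset.mp hx))]
  have hperm : (l₂ ++ l).Perm (K.sort (· ≤ ·)) := by
    rw [← Multiset.coe_eq_coe]
    have h1 : ((l₂ ++ l : List V) : Multiset V) = ((l₂ ++ l).toFinset.val) :=
      congrArg Finset.val (List.toFinset_eq hnd12)
    have h2 : ((K.sort (· ≤ ·) : List V) : Multiset V) = K.val := Finset.sort_eq _ _
    rw [h2, h1, e1]
  have hmem12 : ∀ x ∈ l₂ ++ l, x ∈ K := by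
    intro x hx
    rcases List.mem_append.mp hx with h | h
    · exact Finset.sdiff_subset ((hl₂mem x).mp h)
    · exact hlK x h
  have hprod : mkl G (l₂ ++ l) = prodOf G K := by
    refine mkl_perm hperm ?_
    intro a ha b hb hab
    exact hcommK a (hmem12 a ha) b (hmem12 b hb) hab
  refine ⟨a, ?_, ?_⟩
  · rw [← hprod, hz, ha1, mkl_append, mul_assoc]
  · intro y hy
    rcases ha2 y hy with hIAw' | ⟨x, hxl₂, hor⟩
    · -- y ∈ IA w : show y ∈ N[K] ∩ N[c]
      have hNc : y ∈ NclF G {c} := by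
        by_cases hyc : y = c ∨ G.Adj c y
        · exact mem_NclF_singleton.mpr hyc
        · push_neg at hyc
          have : y ∈ IA (w * CFmk G (FreeMonoid.of c)) :=
            IA_of_comm_mul hIAw' hyc.1 (fun h => hyc.2 (G.adj_symm h))
          exact absurd (hIAs this) hyc.1
      have hNK : y ∈ NclF G K := by
        by_cases hcase : ∃ k ∈ K, y = k ∨ G.Adj k y
        · obtain ⟨k, hk, hk2⟩ := hcase
          rcases hk2 with rfl | h
          · exact mem_NclF.mpr (Or.inl hk)
          · exact mem_NclF.mpr (Or.inr ⟨k, hk, h⟩)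
        · push_neg at hcase
          exfalso
          have hcomm : ∀ x ∈ l, y ≠ x ∧ ¬ G.Adj y x := by
            intro x hx
            have h1 := hcase x (hlK x hx)
            exact ⟨h1.1, fun h => h1.2 (G.adj_symm h)⟩
          have : y ∈ IA z := by
            rw [hz]
            exact IA_comm_mem_mul_list hIAw' hcomm
          exact (hcase y (mem_IAfin.mpr this)).1 rfl
      exact Or.inr ⟨hNK, hNc⟩
    · -- y is adjacent to or equal to an element of K'
      left
      have hxK' : x ∈ K' := (hl₂mem x).mp hxl₂
      rcases hor with rfl | h
      · exact mem_NclF.mpr (Or.inl hxK')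
      · exact mem_NclF.mpr (Or.inr ⟨x, hxK', G.adj_symm h⟩)

/-- Per-side backward. -/
lemma side_backward {a : CF G} {c : V} {l : List V} {K : Finset V}
    (hlnd : l.Nodup)
    (hlK : ∀ x ∈ l, x ∈ K)
    (hKind : IsIndepSet G (↑K : Set V))
    (hKN : ∀ x ∈ K \ l.toFinset, x ∈ NclF G {c})
    (ha : ∀ y ∈ IA a, y ∈ NclF G (K \ l.toFinset) ∨
      (y ∈ NclF G K ∧ y ∈ NclF G {c})) :
    IA (a * prodOf G K) = (↑K : Set V) ∧
    ∃ w, a * prodOf G K = w * mkl G l ∧ IA (w * CFmk G (FreeMonoid.of c)) ⊆ {c} := by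
  classical
  set z := a * prodOf G K with hz
  have hcommK : ∀ x ∈ K, ∀ y ∈ K, x ≠ y → ¬ G.Adj x y := by
    intro x hx y hy _
    exact hKind x (by simpa using hx) y (by simpa using hy)
  have hsortK : ∀ x, x ∈ K.sort (· ≤ ·) ↔ x ∈ K := fun x => Finset.mem_sort _
  have hprodK : prodOf G K = mkl G (K.sort (· ≤ ·)) := rfl
  -- (i) IA z = K
  have hIAz : IA z = (↑K : Set V) := by
    ext x
    constructor
    · intro hx
      rw [hz, hprodK] at hx
      rcases IA_mul_list_cases hx with h | ⟨h1, h2⟩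
      · exact (hsortK x).mp h
      · rcases ha x h1 with h3 | ⟨h3, -⟩
        · rw [mem_NclF] at h3
          rcases h3 with h4 | ⟨k, hk, hadj⟩
          · exact Finset.mem_coe.mpr (Finset.sdiff_subset h4)
          · exfalso
            have hkK : k ∈ K := Finset.sdiff_subset hk
            exact (h2 k ((hsortK k).mpr hkK)).2 (G.adj_symm hadj)
        · rw [mem_NclF] at h3
          rcases h3 with h4 | ⟨k, hk, hadj⟩
          · exact Finset.mem_coe.mpr h4
          · exfalso
            exact (h2 k ((hsortK k).mpr hk)).2 (G.adj_symm hadj)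
    · intro hx
      rw [hz, hprodK]
      exact IA_mem_mul_list
        (fun a' ha' b hb hab =>
          hcommK a' ((hsortK a').mp ha') b ((hsortK b).mp hb) hab)
        ((hsortK x).mpr (Finset.mem_coe.mp hx))
  refine ⟨hIAz, ?_⟩
  -- (ii) division by l
  set K' := K \ l.toFinset with hK'
  set l₂ := K'.sort (· ≤ ·) with hl₂
  have hl₂mem : ∀ x, x ∈ l₂ ↔ x ∈ K' := fun x => Finset.mem_sort _
  have hnd12 : (l₂ ++ l).Nodup := by
    rw [List.nodup_append']
    refine ⟨Finset.sort_nodup _ _, hlnd, ?_⟩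
    intro x hx hx'
    have := (hl₂mem x).mp hx
    rw [hK', Finset.mem_sdiff] at this
    exact this.2 (List.mem_toFinset.mpr hx')
  have e1 : (l₂ ++ l).toFinset = K := by
    rw [List.toFinset_append, hl₂, Finset.sort_toFinset, hK',
      Finset.sdiff_union_of_subset (fun x hx => hlK x (List.mem_toFinset.mp hx))]
  have hperm : (l₂ ++ l).Perm (K.sort (· ≤ ·)) := by
    rw [← Multiset.coe_eq_coe]
    have h1 : ((l₂ ++ l : List V) : Multiset V) = ((l₂ ++ l).toFinset.val) :=
      congrArg Finset.val (List.toFinset_eq hnd12)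
    have h2 : ((K.sort (· ≤ ·) : List V) : Multiset V) = K.val := Finset.sort_eq _ _
    rw [h2, h1, e1]
  have hmem12 : ∀ x ∈ l₂ ++ l, x ∈ K := by
    intro x hx
    rcases List.mem_append.mp hx with h | h
    · exact Finset.sdiff_subset ((hl₂mem x).mp h)
    · exact hlK x h
  have hprod : mkl G (l₂ ++ l) = prodOf G K := by
    refine mkl_perm hperm ?_
    intro a' ha' b hb hab
    exact hcommK a' (hmem12 a' ha') b (hmem12 b hb) hab
  refine ⟨a * mkl G l₂, ?_, ?_⟩
  · rw [hz, ← hprod, mkl_append, mul_assoc]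
  · -- IA (w · c) ⊆ {c}
    intro x hx
    by_contra hxc
    have hxc' : x ≠ c := fun h => hxc (h ▸ rfl)
    have hstep := IA_step (z := a * mkl G l₂ * CFmk G (FreeMonoid.of c)) rfl hx hxc'
    have hxw : x ∈ IA (a * mkl G l₂) := hstep.2
    have hnadj : ¬ G.Adj c x := hstep.1
    rcases IA_mul_list_cases hxw with h | ⟨h1, h2⟩
    · -- x ∈ K' ⊆ N[c]
      have hxK' : x ∈ K' := (hl₂mem x).mp h
      have := hKN x hxK'
      rw [mem_NclF_singleton] at this
      rcases this with h' | h'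
      · exact hxc' h'
      · exact hnadj h'
    · -- x ∈ IA a and commutes with K'
      rcases ha x h1 with h3 | ⟨-, h3⟩
      · rw [mem_NclF] at h3
        rcases h3 with h4 | ⟨k, hk, hadj⟩
        · exact (h2 x ((hl₂mem x).mpr h4)).1 rfl
        · exact (h2 k ((hl₂mem k).mpr hk)).2 (G.adj_symm hadj)
      · rw [mem_NclF_singleton] at h3
        rcases h3 with h' | h'
        · exact hxc' h'
        · exact hnadj h'

end SideTheory



section Assembly

lemma pack_eq {V : Type*} [Fintype V] [LinearOrder V] {G : SimpleGraph V} {u v : V}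
    {p : G.Walk u v}
    (x y : Σ H : {H : Finset V × Finset V // H ∈ BipPathIdx G p},
      {a : CF G // IA a ⊆ ↑(Zone G p H.1)} × {b : CF G // IA b ⊆ ↑(Ztwo G p H.1)})
    (h1 : x.1.1 = y.1.1) (h2 : (x.2.1 : CF G) = ↑y.2.1) (h3 : (x.2.2 : CF G) = ↑y.2.2) :
    x = y := by
  obtain ⟨⟨H, hH⟩, ⟨a, ha⟩, ⟨b, hb⟩⟩ := x
  obtain ⟨⟨H', hH'⟩, ⟨a', ha'⟩, ⟨b', hb'⟩⟩ := y
  dsimp at h1 h2 h3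
  subst h1
  subst h2
  subst h3
  rfl

end Assembly

/-- Proposition 4.1: the map
`(wu, w'v) ↦ ((w·v₂·v₄⋯)/Π_{y∈H₁} y, (w'·v₁·v₃⋯)/Π_{y∈H₂} y)`, where
`H₁ = IA(w·v₂·v₄⋯)` and `H₂ = IA(w'·v₁·v₃⋯)`, is a bijection from
`𝒫_u(G) × 𝒫_v(G)` onto the disjoint union, over all connected bipartite subgraphs
`H` of `G` containing the shortest path `p` and satisfying the conditions of
`BipPathIdx`, of the sets `𝒫^∅_{Z₁(H)}(G) × 𝒫^∅_{Z₂(H)}(G)`. -/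
theorem stmt_19 {V : Type*} [Fintype V] [LinearOrder V] (G : SimpleGraph V)
    (hG : G.Connected) (u v : V) (huv : u ≠ v) (p : G.Walk u v)
    (hpath : p.IsPath) (hshort : p.length = G.dist u v) :
    ∃ Φ : ({w : CF G // w ≠ 1 ∧ IA w ⊆ {u}} × {w : CF G // w ≠ 1 ∧ IA w ⊆ {v}}) ≃
        (Σ H : {H : Finset V × Finset V // H ∈ BipPathIdx G p},
          {a : CF G // IA a ⊆ ↑(Zone G p H.1)} × {b : CF G // IA b ⊆ ↑(Ztwo G p H.1)}),
      ∀ (x : {w : CF G // w ≠ 1 ∧ IA w ⊆ {u}} × {w : CF G // w ≠ 1 ∧ IA w ⊆ {v}})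
        (w w' : CF G),
        x.1.1 = w * CFmk G (FreeMonoid.of u) →
        x.2.1 = w' * CFmk G (FreeMonoid.of v) →
        (↑(Φ x).1.1.1 : Set V) = IA (w * CFmk G (FreeMonoid.ofList (evenVerts p))) ∧
        (↑(Φ x).1.1.2 : Set V) = IA (w' * CFmk G (FreeMonoid.ofList (oddVerts p))) ∧
        w * CFmk G (FreeMonoid.ofList (evenVerts p)) =
          (Φ x).2.1.1 * prodOf G (Φ x).1.1.1 ∧
        w' * CFmk G (FreeMonoid.ofList (oddVerts p)) =
          (Φ x).2.2.1 * prodOf G (Φ x).1.1.2 := by 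
  classical
  set E := evenVerts p with hE
  set O := oddVerts p with hO
  -- basic path facts
  have hm1 : 1 ≤ p.length := by
    by_contra h
    push_neg at h
    have h0 : p.length = 0 := by omega
    have h1 := p.getVert_length
    rw [h0, p.getVert_zero] at h1
    exact huv h1
  have hgv0 : p.getVert 0 = u := p.getVert_zero
  have hgvm : p.getVert p.length = v := p.getVert_length
  have hEmem : ∀ x, (x ∈ E ↔ ∃ i, i ≤ p.length ∧ i % 2 = 1 ∧ p.getVert i = x) :=
    fun x => by rw [hE, evenVerts_eq_pverts]; exact mem_pverts
  have hOmem : ∀ x, (x ∈ O ↔ ∃ i, i ≤ p.length ∧ i % 2 = 0 ∧ p.getVert i = x) :=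
    fun x => by rw [hO, oddVerts_eq_pverts]; exact mem_pverts
  have hEnd : E.Nodup := by rw [hE, evenVerts_eq_pverts]; exact pverts_nodup hpath hshort 1
  have hOnd : O.Nodup := by rw [hO, oddVerts_eq_pverts]; exact pverts_nodup hpath hshort 0
  have hEcomm : ∀ a ∈ E, ∀ b ∈ E, a ≠ b → ¬ G.Adj a b := by
    rw [hE, evenVerts_eq_pverts]; exact pverts_comm hpath hshort 1
  have hOcomm : ∀ a ∈ O, ∀ b ∈ O, a ≠ b → ¬ G.Adj a b := by
    rw [hO, oddVerts_eq_pverts]; exact pverts_comm hpath hshort 0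
  have hadj01 : G.Adj u (p.getVert 1) := by
    have := p.adj_getVert_succ (i := 0) hm1
    rwa [hgv0] at this
  have hs1E : p.getVert 1 ∈ E := (hEmem _).mpr ⟨1, hm1, rfl, rfl⟩
  have huO : u ∈ O := (hOmem _).mpr ⟨0, by omega, rfl, hgv0⟩
  have hclE : u ∈ E ∨ ∃ e ∈ E, G.Adj u e := Or.inr ⟨_, hs1E, hadj01⟩
  have hclO : v ∈ O ∨ ∃ e ∈ O, G.Adj v e := by
    by_cases hpar : p.length % 2 = 0
    · exact Or.inl ((hOmem v).mpr ⟨p.length, le_rfl, hpar, hgvm⟩)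
    · right
      have hadj := p.adj_getVert_succ (i := p.length - 1) (by omega)
      have he : p.length - 1 + 1 = p.length := by omega
      rw [he, hgvm] at hadj
      exact ⟨p.getVert (p.length - 1),
        (hOmem _).mpr ⟨p.length - 1, by omega, by omega, rfl⟩, G.adj_symm hadj⟩
  have hadjcons : ∀ i j, i < j → j ≤ p.length →
      G.Adj (p.getVert i) (p.getVert j) → j = i + 1 := by
    intro i j hij hj hadj
    by_contra hne
    exact shortest_not_adj hshort (by omega) hj hadj
  have hgvinj : ∀ i j, i ≤ p.length → j ≤ p.length →
      p.getVert i = p.getVert j → i = j := by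
    intro i j hi hj heq
    have hi' : i < p.support.length := by have := p.length_support; omega
    have hj' : j < p.support.length := by have := p.length_support; omega
    have hEq : p.support[i]'hi' = p.support[j]'hj' := by
      rw [walk_support_getElem p i hi', walk_support_getElem p j hj']
      exact heq
    exact (List.Nodup.getElem_inj_iff hpath.support_nodup).mp hEq
  have hEO : ∀ x ∈ E, x ∉ O := by
    intro x hxE hxO
    obtain ⟨i, hi, hip, hgvi⟩ := (hEmem x).mp hxE
    obtain ⟨j, hj, hjp, hgvj⟩ := (hOmem x).mp hxO
    have := hgvinj i j hi hj (hgvi.trans hgvj.symm)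
    omega
  -- abbreviations for the forward map
  have hws : ∀ s : {w : CF G // w ≠ 1 ∧ IA w ⊆ {u}},
      s.1 = rdiv s.1 (CFmk G (FreeMonoid.of u)) * CFmk G (FreeMonoid.of u) := by
    intro s
    obtain ⟨x, hx⟩ := IA_nonempty s.2.1
    have hxu : x = u := s.2.2 hx
    subst hxu
    obtain ⟨w, hw⟩ := hx
    exact rdiv_spec ⟨w, hw⟩
  have hwt : ∀ t : {w : CF G // w ≠ 1 ∧ IA w ⊆ {v}},
      t.1 = rdiv t.1 (CFmk G (FreeMonoid.of v)) * CFmk G (FreeMonoid.of v) := by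
    intro t
    obtain ⟨x, hx⟩ := IA_nonempty t.2.1
    have hxv : x = v := t.2.2 hx
    subst hxv
    obtain ⟨w, hw⟩ := hx
    exact rdiv_spec ⟨w, hw⟩
  have hIAs1 : ∀ s : {w : CF G // w ≠ 1 ∧ IA w ⊆ {u}},
      IA (rdiv s.1 (CFmk G (FreeMonoid.of u)) * CFmk G (FreeMonoid.of u)) ⊆ {u} := by
    intro s
    rw [← hws s]
    exact s.2.2
  have hIAs2 : ∀ t : {w : CF G // w ≠ 1 ∧ IA w ⊆ {v}},
      IA (rdiv t.1 (CFmk G (FreeMonoid.of v)) * CFmk G (FreeMonoid.of v)) ⊆ {v} := by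
    intro t
    rw [← hwt t]
    exact t.2.2
  -- the two parts of the bipartition
  have hBip : ∀ (s : {w : CF G // w ≠ 1 ∧ IA w ⊆ {u}})
      (t : {w : CF G // w ≠ 1 ∧ IA w ⊆ {v}}),
      (IAfin G (rdiv s.1 (CFmk G (FreeMonoid.of u)) * mkl G E),
       IAfin G (rdiv t.1 (CFmk G (FreeMonoid.of v)) * mkl G O)) ∈ BipPathIdx G p := by
    intro s t
    set w1 := rdiv s.1 (CFmk G (FreeMonoid.of u)) with hw1
    set w2 := rdiv t.1 (CFmk G (FreeMonoid.of v)) with hw2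
    set H1 := IAfin G (w1 * mkl G E) with hH1
    set H2 := IAfin G (w2 * mkl G O) with hH2
    have hE_H1 : ∀ x ∈ E, x ∈ H1 :=
      fun x hx => mem_IAfin.mpr (IA_mem_mul_list hEcomm hx)
    have hO_H2 : ∀ x ∈ O, x ∈ H2 :=
      fun x hx => mem_IAfin.mpr (IA_mem_mul_list hOcomm hx)
    have hex1 : ∀ x ∈ H1, x ∉ E →
        G.Adj x u ∧ x ∈ IA w1 ∧ ∀ e ∈ E, x ≠ e ∧ ¬ G.Adj x e :=
      fun x hx hxE => side_forward_b (hIAs1 s) hclE (mem_IAfin.mp hx) hxE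
    have hex2 : ∀ x ∈ H2, x ∉ O →
        G.Adj x v ∧ x ∈ IA w2 ∧ ∀ e ∈ O, x ≠ e ∧ ¬ G.Adj x e :=
      fun x hx hxO => side_forward_b (hIAs2 t) hclO (mem_IAfin.mp hx) hxO
    have hdisj : Disjoint H1 H2 := by
      rw [Finset.disjoint_left]
      intro x hx1 hx2
      by_cases hxE : x ∈ E
      · by_cases hxO : x ∈ O
        · exact hEO x hxE hxO
        · obtain ⟨hadj_xv, -, hcommO⟩ := hex2 x hx2 hxO
          obtain ⟨i, hi, hip, hgvi⟩ := (hEmem x).mp hxE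
          rcases Nat.lt_or_ge i p.length with hlt | hge
          · have hcons := hadjcons i p.length hlt le_rfl
              (by rw [hgvi, hgvm]; exact hadj_xv)
            have hvO : v ∈ O := (hOmem v).mpr ⟨p.length, le_rfl, by omega, hgvm⟩
            exact (hcommO v hvO).2 hadj_xv
          · have hieq : i = p.length := by omega
            have hxv : x = v := by rw [← hgvi, hieq, hgvm]
            exact G.loopless.irrefl v (hxv ▸ hadj_xv)
      · by_cases hxO : x ∈ O
        · obtain ⟨hadj_xu, -, -⟩ := hex1 x hx1 hxE
          obtain ⟨j, hj, hjp, hgvj⟩ := (hOmem x).mp hxO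
          rcases Nat.eq_zero_or_pos j with rfl | hpos
          · have hxu : x = u := by rw [← hgvj, hgv0]
            exact G.loopless.irrefl u (hxu ▸ hadj_xu)
          · have hcons := hadjcons 0 j hpos hj
              (by rw [hgv0, hgvj]; exact G.adj_symm hadj_xu)
            omega
        · obtain ⟨hadj_xu, -, -⟩ := hex1 x hx1 hxE
          obtain ⟨-, -, hcommO⟩ := hex2 x hx2 hxO
          exact (hcommO u huO).2 hadj_xu
    have hind1 : IsIndepSet G (↑H1 : Set V) := by
      intro a ha b hb
      by_cases hab : a = b
      · subst hab; exact G.loopless.irrefl a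
      · exact IA_indep (mem_IAfin.mp (Finset.mem_coe.mp ha))
          (mem_IAfin.mp (Finset.mem_coe.mp hb)) hab
    have hind2 : IsIndepSet G (↑H2 : Set V) := by
      intro a ha b hb
      by_cases hab : a = b
      · subst hab; exact G.loopless.irrefl a
      · exact IA_indep (mem_IAfin.mp (Finset.mem_coe.mp ha))
          (mem_IAfin.mp (Finset.mem_coe.mp hb)) hab
    have hmemEH : ∀ i, i ≤ p.length → i % 2 = 1 → p.getVert i ∈ H1 :=
      fun i hi hp => hE_H1 _ ((hEmem _).mpr ⟨i, hi, hp, rfl⟩)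
    have hmemOH : ∀ i, i ≤ p.length → i % 2 = 0 → p.getVert i ∈ H2 :=
      fun i hi hp => hO_H2 _ ((hOmem _).mpr ⟨i, hi, hp, rfl⟩)
    have hpr : ∀ i, i ≤ p.length → (bipGraph G H1 H2).Reachable (p.getVert i) u := by
      intro i
      induction i with
      | zero =>
          intro _
          rw [hgv0]
      | succ n ih =>
          intro hn
          have hadj := p.adj_getVert_succ (i := n) (by omega)
          have hbadj : (bipGraph G H1 H2).Adj (p.getVert (n + 1)) (p.getVert n) := by
            refine ⟨G.adj_symm hadj, ?_⟩
            rcases Nat.mod_two_eq_zero_or_one n with hp | hp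
            · exact Or.inl ⟨hmemEH (n + 1) hn (by omega), hmemOH n (by omega) hp⟩
            · exact Or.inr ⟨hmemOH (n + 1) hn (by omega), hmemEH n (by omega) hp⟩
          exact hbadj.reachable.trans (ih (by omega))
    have hreachu : ∀ a ∈ H1 ∪ H2, (bipGraph G H1 H2).Reachable a u := by
      intro a ha
      rcases Finset.mem_union.mp ha with h | h
      · by_cases haE : a ∈ E
        · obtain ⟨i, hi, hip, hgvi⟩ := (hEmem a).mp haE
          rw [← hgvi]
          exact hpr i hi
        · obtain ⟨hadj_au, -, -⟩ := hex1 a h haE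
          exact (SimpleGraph.Adj.reachable
            (⟨hadj_au, Or.inl ⟨h, hO_H2 u huO⟩⟩ : (bipGraph G H1 H2).Adj a u))
      · by_cases haO : a ∈ O
        · obtain ⟨i, hi, hip, hgvi⟩ := (hOmem a).mp haO
          rw [← hgvi]
          exact hpr i hi
        · obtain ⟨hadj_av, -, hcommO⟩ := hex2 a h haO
          by_cases hpar : p.length % 2 = 0
          · exact absurd hadj_av
              (hcommO v ((hOmem v).mpr ⟨p.length, le_rfl, hpar, hgvm⟩)).2
          · have hvE : v ∈ E := (hEmem v).mpr ⟨p.length, le_rfl, by omega, hgvm⟩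
            have hadjb : (bipGraph G H1 H2).Adj a v :=
              ⟨hadj_av, Or.inr ⟨h, hE_H1 v hvE⟩⟩
            refine hadjb.reachable.trans ?_
            rw [← hgvm]
            exact hpr p.length le_rfl
    refine ⟨hE_H1, hO_H2,
      ⟨hdisj, hind1, hind2, fun a ha b hb => (hreachu a ha).trans (hreachu b hb).symm⟩,
      ?_, ?_⟩
    · intro x hx
      rw [Finset.mem_sdiff] at hx
      obtain ⟨hadj_xu, -, -⟩ := hex1 x hx.1 (fun h => hx.2 (List.mem_toFinset.mpr h))
      exact mem_NclF_singleton.mpr (Or.inr (G.adj_symm hadj_xu))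
    · intro x hx
      rw [Finset.mem_sdiff] at hx
      obtain ⟨hadj_xv, -, -⟩ := hex2 x hx.1 (fun h => hx.2 (List.mem_toFinset.mpr h))
      exact mem_NclF_singleton.mpr (Or.inr (G.adj_symm hadj_xv))
  have hdiv1 : ∀ s : {w : CF G // w ≠ 1 ∧ IA w ⊆ {u}},
      ∃ a, rdiv s.1 (CFmk G (FreeMonoid.of u)) * mkl G E =
        a * prodOf G (IAfin G (rdiv s.1 (CFmk G (FreeMonoid.of u)) * mkl G E)) ∧
        ∀ y ∈ IA a,
          y ∈ NclF G (IAfin G (rdiv s.1 (CFmk G (FreeMonoid.of u)) * mkl G E) \ E.toFinset) ∨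
          (y ∈ NclF G (IAfin G (rdiv s.1 (CFmk G (FreeMonoid.of u)) * mkl G E)) ∧
           y ∈ NclF G {u}) :=
    fun s => side_forward_div (hIAs1 s) hclE hEnd hEcomm
  have hdiv2 : ∀ t : {w : CF G // w ≠ 1 ∧ IA w ⊆ {v}},
      ∃ b, rdiv t.1 (CFmk G (FreeMonoid.of v)) * mkl G O =
        b * prodOf G (IAfin G (rdiv t.1 (CFmk G (FreeMonoid.of v)) * mkl G O)) ∧
        ∀ y ∈ IA b,
          y ∈ NclF G (IAfin G (rdiv t.1 (CFmk G (FreeMonoid.of v)) * mkl G O) \ O.toFinset) ∨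
          (y ∈ NclF G (IAfin G (rdiv t.1 (CFmk G (FreeMonoid.of v)) * mkl G O)) ∧
           y ∈ NclF G {v}) :=
    fun t => side_forward_div (hIAs2 t) hclO hOnd hOcomm
  have hdiv1ex : ∀ s : {w : CF G // w ≠ 1 ∧ IA w ⊆ {u}},
      rdiv s.1 (CFmk G (FreeMonoid.of u)) * mkl G E =
        rdiv (rdiv s.1 (CFmk G (FreeMonoid.of u)) * mkl G E)
          (prodOf G (IAfin G (rdiv s.1 (CFmk G (FreeMonoid.of u)) * mkl G E))) *
        prodOf G (IAfin G (rdiv s.1 (CFmk G (FreeMonoid.of u)) * mkl G E)) := by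
    intro s
    obtain ⟨a, ha, -⟩ := hdiv1 s
    exact rdiv_spec ⟨a, ha⟩
  have hdiv2ex : ∀ t : {w : CF G // w ≠ 1 ∧ IA w ⊆ {v}},
      rdiv t.1 (CFmk G (FreeMonoid.of v)) * mkl G O =
        rdiv (rdiv t.1 (CFmk G (FreeMonoid.of v)) * mkl G O)
          (prodOf G (IAfin G (rdiv t.1 (CFmk G (FreeMonoid.of v)) * mkl G O))) *
        prodOf G (IAfin G (rdiv t.1 (CFmk G (FreeMonoid.of v)) * mkl G O)) := by
    intro t
    obtain ⟨b, hb, -⟩ := hdiv2 t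
    exact rdiv_spec ⟨b, hb⟩
  have hZa : ∀ (s : {w : CF G // w ≠ 1 ∧ IA w ⊆ {u}})
      (t : {w : CF G // w ≠ 1 ∧ IA w ⊆ {v}}),
      IA (rdiv (rdiv s.1 (CFmk G (FreeMonoid.of u)) * mkl G E)
        (prodOf G (IAfin G (rdiv s.1 (CFmk G (FreeMonoid.of u)) * mkl G E)))) ⊆
      ↑(Zone G p (IAfin G (rdiv s.1 (CFmk G (FreeMonoid.of u)) * mkl G E),
        IAfin G (rdiv t.1 (CFmk G (FreeMonoid.of v)) * mkl G O))) := by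
    intro s t y hy
    obtain ⟨a, ha, ha2⟩ := hdiv1 s
    rw [rdiv_eq ha] at hy
    rw [Finset.mem_coe]
    unfold Zone
    rw [Finset.mem_union]
    rcases ha2 y hy with h | ⟨h1, h2⟩
    · exact Or.inl h
    · exact Or.inr (Finset.mem_inter.mpr ⟨h1, h2⟩)
  have hZb : ∀ (s : {w : CF G // w ≠ 1 ∧ IA w ⊆ {u}})
      (t : {w : CF G // w ≠ 1 ∧ IA w ⊆ {v}}),
      IA (rdiv (rdiv t.1 (CFmk G (FreeMonoid.of v)) * mkl G O)
        (prodOf G (IAfin G (rdiv t.1 (CFmk G (FreeMonoid.of v)) * mkl G O)))) ⊆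
      ↑(Ztwo G p (IAfin G (rdiv s.1 (CFmk G (FreeMonoid.of u)) * mkl G E),
        IAfin G (rdiv t.1 (CFmk G (FreeMonoid.of v)) * mkl G O))) := by
    intro s t y hy
    obtain ⟨b, hb, hb2⟩ := hdiv2 t
    rw [rdiv_eq hb] at hy
    rw [Finset.mem_coe]
    unfold Ztwo
    rw [Finset.mem_union]
    rcases hb2 y hy with h | ⟨h1, h2⟩
    · exact Or.inl h
    · exact Or.inr (Finset.mem_inter.mpr ⟨h1, h2⟩)
  -- the backward direction
  have hback1 : ∀ (y : Σ H : {H : Finset V × Finset V // H ∈ BipPathIdx G p},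
      {a : CF G // IA a ⊆ ↑(Zone G p H.1)} × {b : CF G // IA b ⊆ ↑(Ztwo G p H.1)}),
      IA ((y.2.1 : CF G) * prodOf G y.1.1.1) = ↑y.1.1.1 ∧
      (y.2.1 : CF G) * prodOf G y.1.1.1 =
        rdiv ((y.2.1 : CF G) * prodOf G y.1.1.1) (mkl G E) * mkl G E ∧
      IA (rdiv ((y.2.1 : CF G) * prodOf G y.1.1.1) (mkl G E) * CFmk G (FreeMonoid.of u))
        ⊆ {u} := by
    rintro ⟨⟨⟨H1, H2⟩, hH⟩, ⟨a, ha⟩, ⟨b, hb⟩⟩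
    obtain ⟨hHE, hHO, ⟨hdisj, hind1, hind2, hreach⟩, hN1, hN2⟩ := hH
    dsimp only at hHE hN1 ha ⊢
    have ha' : ∀ z ∈ IA a, z ∈ NclF G (H1 \ E.toFinset) ∨
        (z ∈ NclF G H1 ∧ z ∈ NclF G {u}) := by
      intro z hz
      have h0 := ha hz
      rw [Finset.mem_coe] at h0
      unfold Zone at h0
      rw [Finset.mem_union] at h0
      rcases h0 with h | h
      · exact Or.inl h
      · exact Or.inr (Finset.mem_inter.mp h)
    obtain ⟨hIAeq, w₀, hw₀, hsub⟩ :=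
      side_backward (a := a) (c := u) (l := E) (K := H1) hEnd hHE hind1
        (fun x hx => hN1 hx) ha'
    have hrw : rdiv (a * prodOf G H1) (mkl G E) = w₀ := rdiv_eq hw₀
    refine ⟨hIAeq, ?_, ?_⟩
    · rw [hrw]; exact hw₀
    · rw [hrw]; exact hsub
  have hback2 : ∀ (y : Σ H : {H : Finset V × Finset V // H ∈ BipPathIdx G p},
      {a : CF G // IA a ⊆ ↑(Zone G p H.1)} × {b : CF G // IA b ⊆ ↑(Ztwo G p H.1)}),
      IA ((y.2.2 : CF G) * prodOf G y.1.1.2) = ↑y.1.1.2 ∧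
      (y.2.2 : CF G) * prodOf G y.1.1.2 =
        rdiv ((y.2.2 : CF G) * prodOf G y.1.1.2) (mkl G O) * mkl G O ∧
      IA (rdiv ((y.2.2 : CF G) * prodOf G y.1.1.2) (mkl G O) * CFmk G (FreeMonoid.of v))
        ⊆ {v} := by
    rintro ⟨⟨⟨H1, H2⟩, hH⟩, ⟨a, ha⟩, ⟨b, hb⟩⟩
    obtain ⟨hHE, hHO, ⟨hdisj, hind1, hind2, hreach⟩, hN1, hN2⟩ := hH
    dsimp only at hHO hN2 hb ⊢
    have hb' : ∀ z ∈ IA b, z ∈ NclF G (H2 \ O.toFinset) ∨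
        (z ∈ NclF G H2 ∧ z ∈ NclF G {v}) := by
      intro z hz
      have h0 := hb hz
      rw [Finset.mem_coe] at h0
      unfold Ztwo at h0
      rw [Finset.mem_union] at h0
      rcases h0 with h | h
      · exact Or.inl h
      · exact Or.inr (Finset.mem_inter.mp h)
    obtain ⟨hIAeq, w₀, hw₀, hsub⟩ :=
      side_backward (a := b) (c := v) (l := O) (K := H2) hOnd hHO hind2
        (fun x hx => hN2 hx) hb'
    have hrw : rdiv (b * prodOf G H2) (mkl G O) = w₀ := rdiv_eq hw₀
    refine ⟨hIAeq, ?_, ?_⟩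
    · rw [hrw]; exact hw₀
    · rw [hrw]; exact hsub
  refine ⟨{
    toFun := fun x =>
      ⟨⟨(IAfin G (rdiv x.1.1 (CFmk G (FreeMonoid.of u)) * mkl G E),
         IAfin G (rdiv x.2.1 (CFmk G (FreeMonoid.of v)) * mkl G O)), hBip x.1 x.2⟩,
       ⟨⟨rdiv (rdiv x.1.1 (CFmk G (FreeMonoid.of u)) * mkl G E)
           (prodOf G (IAfin G (rdiv x.1.1 (CFmk G (FreeMonoid.of u)) * mkl G E))),
         hZa x.1 x.2⟩,
        ⟨rdiv (rdiv x.2.1 (CFmk G (FreeMonoid.of v)) * mkl G O)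
           (prodOf G (IAfin G (rdiv x.2.1 (CFmk G (FreeMonoid.of v)) * mkl G O))),
         hZb x.1 x.2⟩⟩⟩,
    invFun := fun y =>
      (⟨rdiv ((y.2.1 : CF G) * prodOf G y.1.1.1) (mkl G E) * CFmk G (FreeMonoid.of u),
        mul_of_ne_one _ _, (hback1 y).2.2⟩,
       ⟨rdiv ((y.2.2 : CF G) * prodOf G y.1.1.2) (mkl G O) * CFmk G (FreeMonoid.of v),
        mul_of_ne_one _ _, (hback2 y).2.2⟩),
    left_inv := by
      intro x
      refine Prod.ext (Subtype.ext ?_) (Subtype.ext ?_)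
      · show rdiv (rdiv (rdiv x.1.1 (CFmk G (FreeMonoid.of u)) * mkl G E)
            (prodOf G (IAfin G (rdiv x.1.1 (CFmk G (FreeMonoid.of u)) * mkl G E))) *
            prodOf G (IAfin G (rdiv x.1.1 (CFmk G (FreeMonoid.of u)) * mkl G E)))
            (mkl G E) * CFmk G (FreeMonoid.of u) = x.1.1
        rw [← hdiv1ex x.1,
          show rdiv (rdiv x.1.1 (CFmk G (FreeMonoid.of u)) * mkl G E) (mkl G E) =
            rdiv x.1.1 (CFmk G (FreeMonoid.of u)) from rdiv_eq rfl, ← hws x.1]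
      · show rdiv (rdiv (rdiv x.2.1 (CFmk G (FreeMonoid.of v)) * mkl G O)
            (prodOf G (IAfin G (rdiv x.2.1 (CFmk G (FreeMonoid.of v)) * mkl G O))) *
            prodOf G (IAfin G (rdiv x.2.1 (CFmk G (FreeMonoid.of v)) * mkl G O)))
            (mkl G O) * CFmk G (FreeMonoid.of v) = x.2.1
        rw [← hdiv2ex x.2,
          show rdiv (rdiv x.2.1 (CFmk G (FreeMonoid.of v)) * mkl G O) (mkl G O) =
            rdiv x.2.1 (CFmk G (FreeMonoid.of v)) from rdiv_eq rfl, ← hwt x.2]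
    right_inv := by
      rintro ⟨⟨⟨H1, H2⟩, hH⟩, ⟨a, ha⟩, ⟨b, hb⟩⟩
      obtain ⟨hIAeq1, hdiv1', hsub1⟩ := hback1 ⟨⟨(H1, H2), hH⟩, ⟨a, ha⟩, ⟨b, hb⟩⟩
      obtain ⟨hIAeq2, hdiv2', hsub2⟩ := hback2 ⟨⟨(H1, H2), hH⟩, ⟨a, ha⟩, ⟨b, hb⟩⟩
      dsimp only at hIAeq1 hdiv1' hsub1 hIAeq2 hdiv2' hsub2
      set w1 := rdiv (a * prodOf G H1) (mkl G E) with hw1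
      set w2 := rdiv (b * prodOf G H2) (mkl G O) with hw2
      have e1 : rdiv (w1 * CFmk G (FreeMonoid.of u)) (CFmk G (FreeMonoid.of u)) = w1 :=
        rdiv_eq rfl
      have e1' : rdiv (w2 * CFmk G (FreeMonoid.of v)) (CFmk G (FreeMonoid.of v)) = w2 :=
        rdiv_eq rfl
      have e2 : w1 * mkl G E = a * prodOf G H1 := hdiv1'.symm
      have e2' : w2 * mkl G O = b * prodOf G H2 := hdiv2'.symm
      have e3 : IAfin G (w1 * mkl G E) = H1 := by
        refine Finset.ext (fun x => ?_)
        rw [mem_IAfin, e2]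
        rw [show IA (a * prodOf G H1) = (↑H1 : Set V) from hIAeq1]
        exact Finset.mem_coe
      have e3' : IAfin G (w2 * mkl G O) = H2 := by
        refine Finset.ext (fun x => ?_)
        rw [mem_IAfin, e2']
        rw [show IA (b * prodOf G H2) = (↑H2 : Set V) from hIAeq2]
        exact Finset.mem_coe
      refine pack_eq _ _ ?_ ?_ ?_
      · show (IAfin G (rdiv (w1 * CFmk G (FreeMonoid.of u)) (CFmk G (FreeMonoid.of u)) *
            mkl G E),
          IAfin G (rdiv (w2 * CFmk G (FreeMonoid.of v)) (CFmk G (FreeMonoid.of v)) *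
            mkl G O)) = (H1, H2)
        rw [e1, e1', e3, e3']
      · show rdiv (rdiv (w1 * CFmk G (FreeMonoid.of u)) (CFmk G (FreeMonoid.of u)) * mkl G E)
            (prodOf G (IAfin G (rdiv (w1 * CFmk G (FreeMonoid.of u))
              (CFmk G (FreeMonoid.of u)) * mkl G E))) = a
        rw [e1, e3, e2]
        exact rdiv_eq rfl
      · show rdiv (rdiv (w2 * CFmk G (FreeMonoid.of v)) (CFmk G (FreeMonoid.of v)) * mkl G O)
            (prodOf G (IAfin G (rdiv (w2 * CFmk G (FreeMonoid.of v))
              (CFmk G (FreeMonoid.of v)) * mkl G O))) = b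
        rw [e1', e3', e2']
        exact rdiv_eq rfl }, ?_⟩
  intro x w w' hw hw'
  have hweq : rdiv x.1.1 (CFmk G (FreeMonoid.of u)) = w := rdiv_eq hw
  have hweq' : rdiv x.2.1 (CFmk G (FreeMonoid.of v)) = w' := rdiv_eq hw'
  refine ⟨?_, ?_, ?_, ?_⟩
  · show (↑(IAfin G (rdiv x.1.1 (CFmk G (FreeMonoid.of u)) * mkl G E)) : Set V) = _
    rw [coe_IAfin, hweq]
    rfl
  · show (↑(IAfin G (rdiv x.2.1 (CFmk G (FreeMonoid.of v)) * mkl G O)) : Set V) = _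
    rw [coe_IAfin, hweq']
    rfl
  · show w * CFmk G (FreeMonoid.ofList E) =
      rdiv (rdiv x.1.1 (CFmk G (FreeMonoid.of u)) * mkl G E)
        (prodOf G (IAfin G (rdiv x.1.1 (CFmk G (FreeMonoid.of u)) * mkl G E))) *
      prodOf G (IAfin G (rdiv x.1.1 (CFmk G (FreeMonoid.of u)) * mkl G E))
    rw [← hdiv1ex x.1, hweq]
    rfl
  · show w' * CFmk G (FreeMonoid.ofList O) =
      rdiv (rdiv x.2.1 (CFmk G (FreeMonoid.of v)) * mkl G O)
        (prodOf G (IAfin G (rdiv x.2.1 (CFmk G (FreeMonoid.of v)) * mkl G O))) *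
      prodOf G (IAfin G (rdiv x.2.1 (CFmk G (FreeMonoid.of v)) * mkl G O))
    rw [← hdiv2ex x.2, hweq']
    rfl
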